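/- Let G_ω be an edge-weighted graph. If G_ω contains, as an induced subgraph, either (i) a path of length 2 whose two edges both have weight at least 2, or (ii) two disjoint edges both of weight at least 2, or (iii) a 3-cycle all of whose edges have weight at least 2, then the edge ideal I(G_ω) is not integrally closed. -/

import Mathlib

open MvPolynomial

/-- The edge ideal of an edge-weighted graph `G` with weight function `w`. -/
noncomputable def edgeIdeal (K : Type*) [Field K] {n : ℕ}
    (G : SimpleGraph (Fin n)) (w : Sym2 (Fin n) → ℕ) :
    Ideal (MvPolynomial (Fin n) K) :=
  Ideal.span {m | ∃ i j : Fin n, G.Adj i j ∧ m = X i ^ w s(i, j) * X j ^ w s(i, j)}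

/-- The integral closure of an ideal `I`. -/
def intClosure {R : Type*} [CommRing R] (I : Ideal R) : Set R :=
  {f | ∃ k : ℕ, 0 < k ∧ ∃ c : ℕ → R,
    (∀ i ∈ Finset.Icc 1 k, c i ∈ I ^ i) ∧
    f ^ k + ∑ i ∈ Finset.Icc 1 k, c i * f ^ (k - i) = 0}

/-- An ideal is integrally closed if it equals its integral closure. -/
def IsIntClosed {R : Type*} [CommRing R] (I : Ideal R) : Prop :=
  intClosure I = ↑I

/-- `G_ω` contains an induced path of length 2 both of whose edges have weight ≥ 2. -/
def HasBadPath3 {n : ℕ} (G : SimpleGraph (Fin n)) (w : Sym2 (Fin n) → ℕ) : Prop :=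
  ∃ a b c : Fin n, a ≠ c ∧ G.Adj a b ∧ G.Adj b c ∧ ¬ G.Adj a c ∧
    2 ≤ w s(a, b) ∧ 2 ≤ w s(b, c)

/-- `G_ω` contains two induced disjoint edges both of weight ≥ 2. -/
def HasBadTwoEdges {n : ℕ} (G : SimpleGraph (Fin n)) (w : Sym2 (Fin n) → ℕ) : Prop :=
  ∃ a b c d : Fin n, a ≠ c ∧ a ≠ d ∧ b ≠ c ∧ b ≠ d ∧
    G.Adj a b ∧ G.Adj c d ∧ ¬ G.Adj a c ∧ ¬ G.Adj a d ∧ ¬ G.Adj b c ∧ ¬ G.Adj b d ∧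
    2 ≤ w s(a, b) ∧ 2 ≤ w s(c, d)

/-- `G_ω` contains a 3-cycle all of whose edges have weight ≥ 2. -/
def HasBadTriangle {n : ℕ} (G : SimpleGraph (Fin n)) (w : Sym2 (Fin n) → ℕ) : Prop :=
  ∃ a b c : Fin n, G.Adj a b ∧ G.Adj b c ∧ G.Adj a c ∧
    2 ≤ w s(a, b) ∧ 2 ≤ w s(b, c) ∧ 2 ≤ w s(a, c)


lemma mem_intClosure_of_sq {R : Type*} [CommRing R] {I : Ideal R} {f : R}
    (h : f ^ 2 ∈ I ^ 2) : f ∈ intClosure I := by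
  refine ⟨2, by norm_num, fun i => if i = 2 then -(f^2) else 0, ?_, ?_⟩
  · intro i hi
    simp only
    split_ifs with h2
    · subst h2; exact neg_mem h
    · exact Ideal.zero_mem _
  · have : Finset.Icc 1 2 = ({1, 2} : Finset ℕ) := by decide
    rw [this]
    simp

lemma monomial_mem_edgeIdeal_iff (K : Type*) [Field K] {n : ℕ}
    (G : SimpleGraph (Fin n)) (w : Sym2 (Fin n) → ℕ) (d : Fin n →₀ ℕ) :
    monomial d (1:K) ∈ edgeIdeal K G w ↔
      ∃ i j : Fin n, G.Adj i j ∧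
        Finsupp.single i (w s(i,j)) + Finsupp.single j (w s(i,j)) ≤ d := by
  have hset : {m : MvPolynomial (Fin n) K | ∃ i j, G.Adj i j ∧ m = X i ^ w s(i,j) * X j ^ w s(i,j)}
      = (fun e => monomial e (1:K)) ''
        {e | ∃ i j, G.Adj i j ∧ e = Finsupp.single i (w s(i,j)) + Finsupp.single j (w s(i,j))} := by
    ext m
    constructor
    · rintro ⟨i, j, h, rfl⟩
      exact ⟨_, ⟨i, j, h, rfl⟩, by simp [X_pow_eq_monomial, monomial_mul]⟩
    · rintro ⟨e, ⟨i, j, h, rfl⟩, rfl⟩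
      exact ⟨i, j, h, by simp [X_pow_eq_monomial, monomial_mul]⟩
  rw [edgeIdeal, hset, mem_ideal_span_monomial_image]
  simp [support_monomial]

lemma core (K : Type*) [Field K] {n : ℕ} (G : SimpleGraph (Fin n))
    (w : Sym2 (Fin n) → ℕ) (hw : ∀ e ∈ G.edgeSet, 1 ≤ w e)
    (p q r : Fin n) (hqr : q ≠ r) (hpq : G.Adj p q) (hpr : G.Adj p r)
    (hcond : G.Adj q r → w s(p,q) ≤ w s(q,r))
    (h1 : 2 ≤ w s(p,q)) (h2 : 2 ≤ w s(p,r)) :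
    ¬ IsIntClosed (edgeIdeal K G w) := by
  set W1 := w s(p,q) with hW1
  set W2 := w s(p,r) with hW2
  set f : MvPolynomial (Fin n) K := X p ^ (W1+W2) * X q ^ (W1-1) * X r ^ (W2-1) with hf
  -- f^2 ∈ I^2
  have hu : (X p ^ W1 * X q ^ W1 : MvPolynomial (Fin n) K) ∈ edgeIdeal K G w :=
    Ideal.subset_span ⟨p, q, hpq, rfl⟩
  have hv : (X p ^ W2 * X r ^ W2 : MvPolynomial (Fin n) K) ∈ edgeIdeal K G w :=
    Ideal.subset_span ⟨p, r, hpr, rfl⟩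
  have hsq : f ^ 2 ∈ (edgeIdeal K G w) ^ 2 := by
    have hid : f ^ 2 = (X p ^ (W1+W2) * X q ^ (W1-2) * X r ^ (W2-2)) *
        ((X p ^ W1 * X q ^ W1) * (X p ^ W2 * X r ^ W2)) := by
      obtain ⟨k, hk⟩ := Nat.exists_eq_add_of_le h1
      obtain ⟨l, hl⟩ := Nat.exists_eq_add_of_le h2
      rw [hf, hk, hl]
      have e1 : 2 + k - 1 = k + 1 := by omega
      have e2 : 2 + l - 1 = l + 1 := by omega
      have e3 : 2 + k - 2 = k := by omega
      have e4 : 2 + l - 2 = l := by omega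
      rw [e1, e2, e3, e4]
      ring
    rw [hid, pow_two]
    exact Ideal.mul_mem_left _ _ (Ideal.mul_mem_mul hu hv)
  -- f as a monomial
  have hpq' : p ≠ q := hpq.ne
  have hpr' : p ≠ r := hpr.ne
  set d : Fin n →₀ ℕ := Finsupp.single p (W1+W2) + Finsupp.single q (W1-1)
      + Finsupp.single r (W2-1) with hd
  have hfm : f = monomial d (1:K) := by
    rw [hf, hd]; simp [X_pow_eq_monomial, monomial_mul]
  have dq : d q = W1 - 1 := by
    rw [hd]
    simp [Finsupp.single_apply, hpq', (hqr.symm : r ≠ q)]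
  have dr : d r = W2 - 1 := by
    rw [hd]
    simp [Finsupp.single_apply, hpr', hqr]
  -- f ∉ I
  have hnot : f ∉ edgeIdeal K G w := by
    rw [hfm, monomial_mem_edgeIdeal_iff]
    rintro ⟨i, j, hij, hle⟩
    have hWpos : 1 ≤ w s(i,j) := hw _ (G.mem_edgeSet.mpr hij)
    have hle' := Finsupp.le_def.mp hle
    have hdi : w s(i,j) ≤ d i := by
      refine le_trans ?_ (hle' i)
      rw [Finsupp.add_apply, Finsupp.single_eq_same]
      exact Nat.le_add_right _ _
    have hdj : w s(i,j) ≤ d j := by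
      refine le_trans ?_ (hle' j)
      rw [Finsupp.add_apply, Finsupp.single_eq_same]
      exact Nat.le_add_left _ _
    have hsupp : ∀ x : Fin n, x ≠ p → x ≠ q → x ≠ r → d x = 0 := by
      intro x hxp hxq hxr
      rw [hd]
      simp [Finsupp.single_apply, hxp.symm, hxq.symm, hxr.symm]
    have hi : i = p ∨ i = q ∨ i = r := by
      by_contra hcon
      push_neg at hcon
      have := hsupp i hcon.1 hcon.2.1 hcon.2.2
      omega
    have hj : j = p ∨ j = q ∨ j = r := by
      by_contra hcon
      push_neg at hcon
      have := hsupp j hcon.1 hcon.2.1 hcon.2.2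
      omega
    have hne : i ≠ j := hij.ne
    rcases hi with rfl | rfl | rfl <;> rcases hj with rfl | rfl | rfl
    · exact hne rfl
    · -- (p,q)
      rw [← hW1] at hdj; omega
    · -- (p,r)
      rw [← hW2] at hdj; omega
    · -- (q,p)
      rw [Sym2.eq_swap, ← hW1] at hdi; omega
    · exact hne rfl
    · -- (q,r)
      have := hcond hij
      omega
    · -- (r,p)
      rw [Sym2.eq_swap, ← hW2] at hdi; omega
    · -- (r,q)
      have := hcond (hij.symm)
      rw [Sym2.eq_swap] at hdj
      omega
    · exact hne rfl
  intro hcl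
  exact hnot (by rw [← SetLike.mem_coe, ← hcl]; exact mem_intClosure_of_sq hsq)

lemma core2 (K : Type*) [Field K] {n : ℕ} (G : SimpleGraph (Fin n))
    (w : Sym2 (Fin n) → ℕ) (hw : ∀ e ∈ G.edgeSet, 1 ≤ w e)
    (a b c e : Fin n) (hac : a ≠ c) (hae : a ≠ e) (hbc : b ≠ c) (hbe : b ≠ e)
    (hab : G.Adj a b) (hce : G.Adj c e)
    (nac : ¬ G.Adj a c) (nae : ¬ G.Adj a e) (nbc : ¬ G.Adj b c) (nbe : ¬ G.Adj b e)
    (h1 : 2 ≤ w s(a,b)) (h2 : 2 ≤ w s(c,e)) :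
    ¬ IsIntClosed (edgeIdeal K G w) := by
  set W1 := w s(a,b) with hW1
  set W2 := w s(c,e) with hW2
  set f : MvPolynomial (Fin n) K := X a ^ (W1-1) * X b ^ W1 * X c ^ W2 * X e ^ (W2-1) with hf
  have hu : (X a ^ W1 * X b ^ W1 : MvPolynomial (Fin n) K) ∈ edgeIdeal K G w :=
    Ideal.subset_span ⟨a, b, hab, rfl⟩
  have hv : (X c ^ W2 * X e ^ W2 : MvPolynomial (Fin n) K) ∈ edgeIdeal K G w :=
    Ideal.subset_span ⟨c, e, hce, rfl⟩
  have hsq : f ^ 2 ∈ (edgeIdeal K G w) ^ 2 := by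
    have hid : f ^ 2 = (X a ^ (W1-2) * X b ^ W1 * X c ^ W2 * X e ^ (W2-2)) *
        ((X a ^ W1 * X b ^ W1) * (X c ^ W2 * X e ^ W2)) := by
      obtain ⟨k, hk⟩ := Nat.exists_eq_add_of_le h1
      obtain ⟨l, hl⟩ := Nat.exists_eq_add_of_le h2
      rw [hf, hk, hl]
      have e1 : 2 + k - 1 = k + 1 := by omega
      have e2 : 2 + l - 1 = l + 1 := by omega
      have e3 : 2 + k - 2 = k := by omega
      have e4 : 2 + l - 2 = l := by omega
      rw [e1, e2, e3, e4]
      ring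
    rw [hid, pow_two]
    exact Ideal.mul_mem_left _ _ (Ideal.mul_mem_mul hu hv)
  have hab' : a ≠ b := hab.ne
  have hce' : c ≠ e := hce.ne
  set d : Fin n →₀ ℕ := Finsupp.single a (W1-1) + Finsupp.single b W1
      + Finsupp.single c W2 + Finsupp.single e (W2-1) with hd
  have hfm : f = monomial d (1:K) := by
    rw [hf, hd]; simp [X_pow_eq_monomial, monomial_mul]
  have da : d a = W1 - 1 := by
    rw [hd]
    simp [Finsupp.single_apply, hab'.symm, hac.symm, hae.symm]
  have de : d e = W2 - 1 := by
    rw [hd]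
    simp [Finsupp.single_apply, hae, hbe, hce']
  have hnot : f ∉ edgeIdeal K G w := by
    rw [hfm, monomial_mem_edgeIdeal_iff]
    rintro ⟨i, j, hij, hle⟩
    have hWpos : 1 ≤ w s(i,j) := hw _ (G.mem_edgeSet.mpr hij)
    have hle' := Finsupp.le_def.mp hle
    have hdi : w s(i,j) ≤ d i := by
      refine le_trans ?_ (hle' i)
      rw [Finsupp.add_apply, Finsupp.single_eq_same]
      exact Nat.le_add_right _ _
    have hdj : w s(i,j) ≤ d j := by
      refine le_trans ?_ (hle' j)
      rw [Finsupp.add_apply, Finsupp.single_eq_same]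
      exact Nat.le_add_left _ _
    have hsupp : ∀ x : Fin n, x ≠ a → x ≠ b → x ≠ c → x ≠ e → d x = 0 := by
      intro x hxa hxb hxc hxe
      rw [hd]
      simp [Finsupp.single_apply, hxa.symm, hxb.symm, hxc.symm, hxe.symm]
    have hi : i = a ∨ i = b ∨ i = c ∨ i = e := by
      by_contra hcon
      push_neg at hcon
      have := hsupp i hcon.1 hcon.2.1 hcon.2.2.1 hcon.2.2.2
      omega
    have hj : j = a ∨ j = b ∨ j = c ∨ j = e := by
      by_contra hcon
      push_neg at hcon
      have := hsupp j hcon.1 hcon.2.1 hcon.2.2.1 hcon.2.2.2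
      omega
    have hne : i ≠ j := hij.ne
    rcases hi with rfl | rfl | rfl | rfl <;> rcases hj with rfl | rfl | rfl | rfl
    · exact hne rfl
    · rw [← hW1] at hdi; omega
    · exact nac hij
    · exact nae hij
    · rw [Sym2.eq_swap, ← hW1] at hdj; omega
    · exact hne rfl
    · exact nbc hij
    · exact nbe hij
    · exact nac hij.symm
    · exact nbc hij.symm
    · exact hne rfl
    · rw [← hW2] at hdj; omega
    · exact nae hij.symm
    · exact nbe hij.symm
    · rw [Sym2.eq_swap, ← hW2] at hdi; omega
    · exact hne rfl
  intro hcl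
  exact hnot (by rw [← SetLike.mem_coe, ← hcl]; exact mem_intClosure_of_sq hsq)

/-- If `G_ω` contains, as an induced subgraph, a path of length 2 with both edges of
weight ≥ 2, or two disjoint edges of weight ≥ 2, or a 3-cycle with all edges of
weight ≥ 2, then `I(G_ω)` is not integrally closed. -/
theorem edgeIdeal_not_intClosed_of_bad_induced_subgraph
    (K : Type*) [Field K] {n : ℕ} (G : SimpleGraph (Fin n))
    (w : Sym2 (Fin n) → ℕ) (hw : ∀ e ∈ G.edgeSet, 1 ≤ w e)
    (hbad : HasBadPath3 G w ∨ HasBadTwoEdges G w ∨ HasBadTriangle G w) :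
    ¬ IsIntClosed (edgeIdeal K G w) := by
  rcases hbad with ⟨a, b, c, hac, hab, hbc, hnac, h1, h2⟩ |
    ⟨a, b, c, e, hac, hae, hbc, hbe, hab, hce, nac, nae, nbc, nbe, h1, h2⟩ |
    ⟨a, b, c, hab, hbc, hac, h1, h2, h3⟩
  · refine core K G w hw b a c hac hab.symm hbc (fun h => absurd h hnac) ?_ h2
    rw [show s(b,a) = s(a,b) from Sym2.eq_swap]; exact h1
  · exact core2 K G w hw a b c e hac hae hbc hbe hab hce nac nae nbc nbe h1 h2
  · rcases le_total (w s(a,b)) (w s(b,c)) with hle | hle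
    · exact core K G w hw a b c hbc.ne hab hac (fun _ => hle) h1 h3
    · refine core K G w hw c b a hab.ne.symm hbc.symm hac.symm (fun _ => ?_) ?_ ?_
      · rw [show s(c,b) = s(b,c) from Sym2.eq_swap, show s(b,a) = s(a,b) from Sym2.eq_swap]
        exact hle
      · rw [show s(c,b) = s(b,c) from Sym2.eq_swap]; exact h2
      · rw [show s(c,a) = s(a,c) from Sym2.eq_swap]; exact h3
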